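/- arXiv:1606.00279 — 5 statements merged into one kernel-verified Lean document; each statement's English description precedes it below -/
import Mathlib

section
/- Let B(r) be a matrix-valued function of one real variable r of the form B(r) = B_0 + r·e_j·e_m^T, invertible at some r_0. If (B(r_0)^{-1})_{β j} ≠ 0 and (B(r_0)^{-1})_{m α} ≠ 0, then the function r ↦ (B(r)^{-1})_{β α} is not identically zero near r_0. -/
open Filter Topology Matrix

theorem not_eventually_zero {n : Type*} [Fintype n] [DecidableEq n]
    (B₀ : Matrix n n ℝ) (j m β α : n) (r₀ : ℝ)
    (hinv : IsUnit (B₀ + r₀ • Matrix.single j m (1 : ℝ)).det)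
    (h1 : (B₀ + r₀ • Matrix.single j m (1 : ℝ))⁻¹ β j ≠ 0)
    (h2 : (B₀ + r₀ • Matrix.single j m (1 : ℝ))⁻¹ m α ≠ 0) :
    ¬ ∀ᶠ r in nhds r₀, (B₀ + r • Matrix.single j m (1 : ℝ))⁻¹ β α = 0 := by
  intro hev
  set E := Matrix.single j m (1 : ℝ) with hE
  set A := B₀ + r₀ • E with hA
  have hBcont : Continuous fun r : ℝ => B₀ + r • E :=
    continuous_const.add (continuous_id.smul continuous_const)
  have hdetcont : Continuous fun r : ℝ => (B₀ + r • E).det := hBcont.matrix_det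
  have hdet0 : A.det ≠ 0 := hinv.ne_zero
  have hdetev : ∀ᶠ r in 𝓝 r₀, (B₀ + r • E).det ≠ 0 :=
    (hdetcont.continuousAt (x := r₀)).eventually_ne hdet0
  -- A⁻¹ β α = 0
  have hA0 : A⁻¹ β α = 0 := hev.self_of_nhds
  -- the key algebraic identity
  have key : ∀ r : ℝ, (B₀ + r • E).det ≠ 0 →
      (B₀ + r • E)⁻¹ β α - A⁻¹ β α
        = -((r - r₀) * ((B₀ + r • E)⁻¹ β j * A⁻¹ m α)) := by
    intro r hr
    set Br := B₀ + r • E with hBr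
    have hrU : IsUnit Br.det := isUnit_iff_ne_zero.mpr hr
    have hdiff : A - Br = -((r - r₀) • E) := by
      rw [hA, hBr]; module
    have hmat : Br⁻¹ - A⁻¹ = Br⁻¹ * (A - Br) * A⁻¹ := by
      rw [Matrix.mul_sub, Matrix.sub_mul, Matrix.mul_assoc Br⁻¹ A A⁻¹,
        Matrix.mul_nonsing_inv _ hinv, Matrix.mul_one,
        Matrix.nonsing_inv_mul _ hrU, Matrix.one_mul]
    have := congrArg (fun M => M β α) hmat
    simp only [Matrix.sub_apply] at this
    rw [this, hdiff]
    simp only [hE, Matrix.mul_apply, Matrix.neg_apply, Matrix.smul_apply,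
      Matrix.single, Matrix.of_apply, smul_eq_mul, mul_ite, ite_mul,
      mul_one, mul_zero, zero_mul, one_mul, Finset.sum_ite_eq,
      Finset.sum_ite_eq', Finset.mul_sum, Finset.sum_mul, neg_mul, mul_neg,
      Finset.sum_neg_distrib]
    simp only [ite_and, Finset.sum_ite_eq, Finset.sum_ite_eq',
      Finset.mem_univ, if_true]
    ring
  -- so eventually (r - r₀) * ((B r)⁻¹ β j * A⁻¹ m α) = 0
  have hev2 : ∀ᶠ r in 𝓝 r₀, (r - r₀) * ((B₀ + r • E)⁻¹ β j * A⁻¹ m α) = 0 := by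
    filter_upwards [hev, hdetev] with r h0 hd
    have := key r hd
    rw [h0, hA0] at this
    linarith [this]
  -- continuity of r ↦ (B r)⁻¹ β j at r₀
  have hcontinv : ContinuousAt (fun r : ℝ => (B₀ + r • E)⁻¹ β j) r₀ := by
    have heq : ∀ r : ℝ, (B₀ + r • E)⁻¹ β j
        = ((B₀ + r • E).det)⁻¹ * (B₀ + r • E).adjugate β j := by
      intro r
      rw [Matrix.inv_def]
      simp [Ring.inverse_eq_inv']
    simp only [heq]
    exact (hdetcont.continuousAt.inv₀ hdet0).mul
      (((continuous_apply j).comp ((continuous_apply β).comp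
        hBcont.matrix_adjugate)).continuousAt)
  have hnz : ∀ᶠ r in 𝓝 r₀, (B₀ + r • E)⁻¹ β j ≠ 0 :=
    hcontinv.eventually_ne h1
  -- work in the punctured neighborhood
  have h3 : ∀ᶠ r in 𝓝[≠] r₀, False := by
    have h2' : ∀ᶠ r in 𝓝[≠] r₀,
        (r - r₀) * ((B₀ + r • E)⁻¹ β j * A⁻¹ m α) = 0 :=
      hev2.filter_mono nhdsWithin_le_nhds
    have hnz' : ∀ᶠ r in 𝓝[≠] r₀, (B₀ + r • E)⁻¹ β j ≠ 0 :=
      hnz.filter_mono nhdsWithin_le_nhds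
    filter_upwards [h2', hnz', self_mem_nhdsWithin] with r hz hn hne
    rcases mul_eq_zero.mp hz with h | h
    · exact hne (by simp [Set.mem_singleton_iff, sub_eq_zero.mp h])
    · rcases mul_eq_zero.mp h with h' | h'
      · exact hn h'
      · exact h2 h'
  exact (h3.exists).elim (fun _ hf => hf)
end

section
/- (Schwartz–Zippel) Let F be a field, q : F^N → F a nonzero polynomial of total degree at most M, and T ⊆ F a finite nonempty set. Then the number of points x ∈ T^N with q(x) = 0 is at most M·|T|^{N-1}; equivalently, the probability that a uniformly random x ∈ T^N satisfies q(x)=0 is at most M/|T|. -/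
open scoped Classical in
theorem sz_aux {F : Type*} [Field F] : ∀ (N : ℕ) (q : MvPolynomial (Fin N) F), q ≠ 0 →
    ∀ T : Finset F,
    ((Fintype.piFinset fun _ : Fin N => T).filter
        (fun x => MvPolynomial.eval x q = 0)).card * T.card ≤ q.totalDegree * T.card ^ N := by
  intro N
  induction N with
  | zero =>
    intro q hq T
    obtain ⟨a, rfl⟩ := MvPolynomial.C_surjective (Fin 0) q
    have ha : a ≠ 0 := fun h => hq (by rw [h, map_zero])
    have : (Fintype.piFinset fun _ : Fin 0 => T).filter
        (fun x => MvPolynomial.eval x (MvPolynomial.C a) = 0) = ∅ := by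
      refine Finset.filter_eq_empty_iff.mpr fun x _ => ?_
      simpa using ha
    simp [this, ha]
  | succ N ih =>
    intro q hq T
    set p := MvPolynomial.finSuccEquiv F N q with hp_def
    have hp : p ≠ 0 := fun h => hq (by
      simpa using (MvPolynomial.finSuccEquiv F N).injective (h.trans (map_zero _).symm))
    set d := p.natDegree with hd_def
    have hlead : p.leadingCoeff ≠ 0 := Polynomial.leadingCoeff_ne_zero.mpr hp
    have hdeg : (p.leadingCoeff).totalDegree + d ≤ q.totalDegree :=
      MvPolynomial.totalDegree_coeff_finSuccEquiv_add_le q d hlead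
    set piF := Fintype.piFinset fun _ : Fin N => T with hpiF
    set S := (Fintype.piFinset fun _ : Fin (N + 1) => T).filter
        (fun x => MvPolynomial.eval x q = 0) with hS
    have htail : ∀ x ∈ S, Fin.tail x ∈ piF := by
      intro x hx
      simp only [hS, Finset.mem_filter, Fintype.mem_piFinset] at hx
      exact Fintype.mem_piFinset.mpr fun i => hx.1 _
    have hfib : ∀ s ∈ piF, (S.filter fun x => Fin.tail x = s).card ≤
        (T.filter fun y => Polynomial.eval y (p.map (MvPolynomial.eval s)) = 0).card := by
      intro s _
      refine Finset.card_le_card_of_injOn (fun x => x 0) ?_ ?_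
      · intro x hx
        simp only [Finset.mem_coe, Finset.mem_filter, hS, Fintype.mem_piFinset] at hx ⊢
        obtain ⟨⟨hx1, hx2⟩, hx3⟩ := hx
        refine ⟨hx1 0, ?_⟩
        rw [← MvPolynomial.eval_eq_eval_mv_eval', ← hx3, Fin.cons_self_tail]
        exact hx2
      · intro x hx y hy hxy
        simp only [Finset.mem_coe, Finset.mem_filter] at hx hy
        have := hx.2.trans hy.2.symm
        funext i
        refine Fin.cases ?_ ?_ i
        · exact hxy
        · intro j; exact congrFun this j
    have hroot : ∀ s ∈ piF,
        (T.filter fun y => Polynomial.eval y (p.map (MvPolynomial.eval s)) = 0).card ≤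
        (if MvPolynomial.eval s p.leadingCoeff = 0 then T.card else 0) + d := by
      intro s _
      by_cases h0 : MvPolynomial.eval s p.leadingCoeff = 0
      · rw [if_pos h0]
        exact le_add_right (Finset.card_le_card (Finset.filter_subset _ _))
      · rw [if_neg h0, zero_add]
        set P := p.map (MvPolynomial.eval s) with hP_def
        have hP : P ≠ 0 := fun h => h0 (by
          have := congrArg (fun r => Polynomial.coeff r d) h
          exact (by simpa [hP_def, Polynomial.coeff_map] using this : MvPolynomial.eval s (p.coeff d) = 0))
        have hsub : (T.filter fun y => Polynomial.eval y P = 0) ⊆ P.roots.toFinset := by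
          intro y hy
          rw [Finset.mem_filter] at hy
          exact Multiset.mem_toFinset.mpr ((Polynomial.mem_roots hP).mpr hy.2)
        calc (T.filter fun y => Polynomial.eval y P = 0).card
            ≤ P.roots.toFinset.card := Finset.card_le_card hsub
          _ ≤ Multiset.card P.roots := Multiset.toFinset_card_le _
          _ ≤ P.natDegree := Polynomial.card_roots' P
          _ ≤ d := Polynomial.natDegree_map_le
    have hA0 : (piF.filter fun s => MvPolynomial.eval s p.leadingCoeff = 0).card * T.card ≤
        p.leadingCoeff.totalDegree * T.card ^ N := ih p.leadingCoeff hlead T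
    have hScard : S.card ≤ (piF.filter fun s => MvPolynomial.eval s p.leadingCoeff = 0).card
        * T.card + T.card ^ N * d := by
      calc S.card = ∑ s ∈ piF, (S.filter fun x => Fin.tail x = s).card :=
            Finset.card_eq_sum_card_fiberwise htail
        _ ≤ ∑ s ∈ piF, ((if MvPolynomial.eval s p.leadingCoeff = 0 then T.card else 0) + d) :=
            Finset.sum_le_sum fun s hs => (hfib s hs).trans (hroot s hs)
        _ = (∑ s ∈ piF, if MvPolynomial.eval s p.leadingCoeff = 0 then T.card else 0)
            + piF.card * d := by rw [Finset.sum_add_distrib, Finset.sum_const, smul_eq_mul]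
        _ = (piF.filter fun s => MvPolynomial.eval s p.leadingCoeff = 0).card * T.card
            + T.card ^ N * d := by
            rw [← Finset.sum_filter, Finset.sum_const, smul_eq_mul, hpiF,
              Fintype.card_piFinset]
            simp
    calc S.card * T.card ≤ ((piF.filter fun s => MvPolynomial.eval s p.leadingCoeff = 0).card
          * T.card + T.card ^ N * d) * T.card := Nat.mul_le_mul_right _ hScard
      _ = (piF.filter fun s => MvPolynomial.eval s p.leadingCoeff = 0).card * T.card * T.card
          + d * T.card ^ (N + 1) := by ring
      _ ≤ p.leadingCoeff.totalDegree * T.card ^ N * T.card + d * T.card ^ (N + 1) := by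
          exact Nat.add_le_add_right (Nat.mul_le_mul_right _ hA0) _
      _ = (p.leadingCoeff.totalDegree + d) * T.card ^ (N + 1) := by ring
      _ ≤ q.totalDegree * T.card ^ (N + 1) := Nat.mul_le_mul_right _ hdeg

open scoped Classical in
theorem schwartz_zippel {F : Type*} [Field F] (N M : ℕ)
    (q : MvPolynomial (Fin N) F) (hq : q ≠ 0) (hdeg : q.totalDegree ≤ M)
    (T : Finset F) (hT : T.Nonempty) :
    ((Fintype.piFinset fun _ : Fin N => T).filter
        (fun x => MvPolynomial.eval x q = 0)).card ≤ M * T.card ^ (N - 1) := by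
  have hTpos : 0 < T.card := Finset.card_pos.mpr hT
  cases N with
  | zero =>
    obtain ⟨a, rfl⟩ := MvPolynomial.C_surjective (Fin 0) q
    have ha : a ≠ 0 := fun h => hq (by rw [h, map_zero])
    have : (Fintype.piFinset fun _ : Fin 0 => T).filter
        (fun x => MvPolynomial.eval x (MvPolynomial.C a) = 0) = ∅ := by
      refine Finset.filter_eq_empty_iff.mpr fun x _ => ?_
      simpa using ha
    simp [this, ha]
  | succ K =>
    refine Nat.le_of_mul_le_mul_right ?_ hTpos
    calc ((Fintype.piFinset fun _ : Fin (K + 1) => T).filter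
          (fun x => MvPolynomial.eval x q = 0)).card * T.card
        ≤ q.totalDegree * T.card ^ (K + 1) := sz_aux (K + 1) q hq T
      _ ≤ M * T.card ^ (K + 1) := Nat.mul_le_mul_right _ hdeg
      _ = M * T.card ^ (K + 1 - 1) * T.card := by simp [pow_succ]; ring
end

section
/- With S an M×E matrix of rank M and R the generic rate matrix supported on the input relation ⊢, the polynomial det(SR) in the variables r_{jm} is nonzero if and only if there exists a child selection J : M → E such that the M×M submatrix of S with columns J(M) is invertible. -/
open Matrix in
open scoped Classical in
theorem det_mul_expand {K : Type*} [CommRing K] {M E : ℕ}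
    (A : Matrix (Fin M) (Fin E) K) (B : Matrix (Fin E) (Fin M) K) :
    (A * B).det = ∑ J : Fin M → Fin E,
      (∏ m, B (J m) m) * (A.submatrix id J).det := by
  rw [← Matrix.det_transpose]
  have h1 : ((A * B)ᵀ : Matrix (Fin M) (Fin M) K) =
      fun m => ∑ j : Fin E, B j m • Aᵀ j := by
    funext m m''
    simp [Matrix.transpose_apply, Matrix.mul_apply, Finset.sum_apply, mul_comm]
  have h2 : (A * B)ᵀ.det =
      (Matrix.detRowAlternating : (Fin M → K) [⋀^Fin M]→ₗ[K] K) (A * B)ᵀ := rfl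
  rw [h2, h1]
  have hsum := (Matrix.detRowAlternating : (Fin M → K) [⋀^Fin M]→ₗ[K] K).toMultilinearMap.map_sum
    (fun m j => B j m • Aᵀ j)
  simp only [AlternatingMap.coe_multilinearMap] at hsum
  rw [hsum]
  refine Finset.sum_congr rfl fun J _ => ?_
  have h3 := (Matrix.detRowAlternating : (Fin M → K) [⋀^Fin M]→ₗ[K] K).toMultilinearMap.map_smul_univ
    (fun m => B (J m) m) (fun m => Aᵀ (J m))
  simp only [AlternatingMap.coe_multilinearMap] at h3 ⊢
  rw [h3, smul_eq_mul]
  congr 1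
  rw [← Matrix.det_transpose (A.submatrix id J)]
  rfl

open MvPolynomial in
open scoped Classical in
theorem det_SR_nonzero_iff_child_selection (E M : ℕ) (inp : Fin M → Fin E → Prop)
    (S : Matrix (Fin M) (Fin E) ℝ) (hrank : S.rank = M)
    (R : Matrix (Fin E) (Fin M) (MvPolynomial (Fin E × Fin M) ℝ))
    (hR : ∀ j m, R j m = if inp m j then X (j, m) else 0) :
    (S.map (C : ℝ → MvPolynomial (Fin E × Fin M) ℝ) * R).det ≠ 0 ↔
      ∃ J : Fin M → Fin E, Function.Injective J ∧ (∀ m, inp m (J m)) ∧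
        (S.submatrix id J).det ≠ 0 := by
  constructor
  · intro hdet
    by_contra hno
    push_neg at hno
    apply hdet
    rw [det_mul_expand]
    refine Finset.sum_eq_zero fun J _ => ?_
    by_cases hinj : Function.Injective J
    · by_cases hinp : ∀ m, inp m (J m)
      · have h0 : (S.submatrix id J).det = 0 := hno J hinj hinp
        have hC : ((S.map (C : ℝ → MvPolynomial (Fin E × Fin M) ℝ)).submatrix id J).det
            = (C : ℝ →+* MvPolynomial (Fin E × Fin M) ℝ) (S.submatrix id J).det := by
          rw [(C : ℝ →+* MvPolynomial (Fin E × Fin M) ℝ).map_det]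
          rfl
        rw [hC, h0, map_zero, mul_zero]
      · push_neg at hinp
        obtain ⟨m, hm⟩ := hinp
        have hz : R (J m) m = 0 := by rw [hR]; simp [hm]
        rw [Finset.prod_eq_zero (f := fun m => R (J m) m) (Finset.mem_univ m) hz, zero_mul]
    · rw [Function.not_injective_iff] at hinj
      obtain ⟨a, b, hab, hne⟩ := hinj
      have hz : ((S.map (C : ℝ → MvPolynomial (Fin E × Fin M) ℝ)).submatrix id J).det = 0 := by
        apply Matrix.det_zero_of_column_eq hne
        intro k
        simp [Matrix.submatrix_apply, hab]
      rw [hz, mul_zero]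
  · rintro ⟨J, hinj, hinp, hdet⟩
    intro h0
    apply hdet
    set φ : Fin E × Fin M → ℝ := fun p => if J p.2 = p.1 then 1 else 0 with hφ
    have heval := congrArg (eval φ) h0
    rw [map_zero, RingHom.map_det, RingHom.mapMatrix_apply] at heval
    have hmap : ((S.map (C : ℝ → MvPolynomial (Fin E × Fin M) ℝ) * R).map (eval φ))
        = S.submatrix id J := by
      ext m m'
      simp only [Matrix.map_apply, Matrix.mul_apply, map_sum, map_mul, eval_C]
      have hEj : ∀ j : Fin E, eval φ (R j m') = if J m' = j then 1 else 0 := by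
        intro j
        rw [hR]
        by_cases h : inp m' j
        · simp [h, hφ, eval_X]
        · have hne : ¬ J m' = j := fun hc => h (hc ▸ hinp m')
          simp [h, hne]
      simp only [hEj, mul_ite, mul_one, mul_zero]
      rw [Finset.sum_ite_eq Finset.univ (J m') (fun j => S m j)]
      simp
    rw [hmap] at heval
    exact heval
end

section
/- Let S be an M×E matrix with rank M, R the generic rate matrix, and assume det(SR) ≢ 0. For j* ∈ E, the polynomial identity z^{j*}_{j*} · det(SR) = Σ_{J : M → E∖{j*}} sgn(J)·det(S^{J(M)})·∏_m r_{J(m),m} holds, where z^{j*} = -B^{-1}e_{j*} and the sum ranges over all child selections J avoiding j*. -/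
open Matrix in
theorem aux_self_influence {K : Type*} [Field K] {E M : ℕ} (j₀ : Fin E)
    (R : Matrix (Fin E) (Fin M) K) (S' : Matrix (Fin M) (Fin E) K)
    (hdet : (S' * R).det ≠ 0) :
    (-(Matrix.fromBlocks (-1) R S' 0)⁻¹.mulVec (Pi.single (Sum.inl j₀) 1)) (Sum.inl j₀)
        * (S' * R).det
      = ∑ J : Fin M → Fin E,
          (∏ m, (if J m = j₀ then (0 : K) else R (J m) m)) * (S'.submatrix id J).det := by
  classical
  set B : Matrix (Fin E ⊕ Fin M) (Fin E ⊕ Fin M) K := Matrix.fromBlocks (-1) R S' 0 with hB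
  set R' : Matrix (Fin E) (Fin M) K := Matrix.of fun j m => if j = j₀ then 0 else R j m with hR'
  set A' : Matrix (Fin E) (Fin E) K :=
    Matrix.diagonal (fun j => if j = j₀ then (1 : K) else -1) with hA'
  have hA'A' : A' * A' = 1 := by
    rw [hA', Matrix.diagonal_mul_diagonal]
    have h0 : (fun i => (if i = j₀ then (1 : K) else -1) * if i = j₀ then (1:K) else -1)
        = fun _ => (1 : K) := by
      funext i; split_ifs <;> ring
    rw [h0, Matrix.diagonal_one]
  letI : Invertible A' := ⟨A', hA'A', hA'A'⟩
  have hinvA' : ⅟A' = A' := invOf_eq_right_inv hA'A'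
  letI : Invertible (-1 : Matrix (Fin E) (Fin E) K) := ⟨-1, by simp, by simp⟩
  have hinv1 : ⅟(-1 : Matrix (Fin E) (Fin E) K) = -1 := invOf_eq_right_inv (by simp)
  have hdetB : B.det = (-1 : K) ^ E * (S' * R).det := by
    rw [hB, Matrix.det_fromBlocks₁₁]
    congr 1
    · rw [Matrix.det_neg, Matrix.det_one, mul_one, Fintype.card_fin]
    · rw [hinv1]
      congr 1
      rw [Matrix.mul_neg, Matrix.mul_one, Matrix.neg_mul, zero_sub, neg_neg]
  have hBrow : B.updateRow (Sum.inl j₀) (Pi.single (Sum.inl j₀) 1)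
      = Matrix.fromBlocks A' R' S' 0 := by
    rw [hB]
    ext i j
    rcases i with i | i <;> rcases j with j | j <;>
      simp only [Matrix.updateRow_apply, Matrix.fromBlocks_apply₁₁, Matrix.fromBlocks_apply₁₂,
        Matrix.fromBlocks_apply₂₁, Matrix.fromBlocks_apply₂₂, hA', hR', Matrix.diagonal_apply,
        Matrix.of_apply, Sum.inl.injEq, Pi.single_apply, Matrix.neg_apply, Matrix.one_apply]
    · by_cases h : i = j₀
      · subst h; simp [eq_comm]
      · simp only [h, if_false]
        split_ifs <;> simp_all
    · by_cases h : i = j₀ <;> simp [h]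
    · simp
    · simp
  have hdetM : (Matrix.fromBlocks A' R' S' 0).det
      = (∏ j, if j = j₀ then (1 : K) else -1) * (S' * R').det := by
    rw [Matrix.det_fromBlocks₁₁]
    have hAR : A' * R' = -R' := by
      ext j m
      rw [hA', Matrix.diagonal_mul]
      simp only [hR', Matrix.of_apply, Matrix.neg_apply]
      split_ifs <;> ring
    rw [hinvA', Matrix.mul_assoc, hAR, Matrix.mul_neg, zero_sub, neg_neg, hA',
      Matrix.det_diagonal]
  set s : K := ∏ j, if j = j₀ then (1 : K) else -1 with hs
  have hsign : s * (-1 : K) ^ E = -1 := by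
    have hpow : (-1 : K) ^ E = ∏ _j : Fin E, (-1 : K) := by simp
    rw [hs, hpow, ← Finset.prod_mul_distrib]
    have h1 : ∀ j : Fin E, (if j = j₀ then (1 : K) else -1) * -1
        = if j = j₀ then (-1 : K) else 1 := by
      intro j; split_ifs <;> ring
    rw [Finset.prod_congr rfl fun j _ => h1 j,
      Finset.prod_ite_eq' Finset.univ j₀ fun _ => (-1 : K)]
    simp
  have hz0 : (-(B⁻¹).mulVec (Pi.single (Sum.inl j₀) 1)) (Sum.inl j₀)
      = -(B⁻¹ (Sum.inl j₀) (Sum.inl j₀)) := by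
    simp [Matrix.mulVec_single]
  have hBdet_ne : B.det ≠ 0 := by
    rw [hdetB]
    exact mul_ne_zero (pow_ne_zero _ (neg_ne_zero.mpr one_ne_zero)) hdet
  have hinvB : B⁻¹ (Sum.inl j₀) (Sum.inl j₀) = (B.det)⁻¹ * (s * (S' * R').det) := by
    rw [Matrix.inv_def, Matrix.smul_apply, Ring.inverse_eq_inv, smul_eq_mul,
      Matrix.adjugate_apply, hBrow, hdetM]
  have key : (-(B⁻¹).mulVec (Pi.single (Sum.inl j₀) 1)) (Sum.inl j₀) * (S' * R).det
      = (S' * R').det := by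
    have hsE : s = -((-1 : K) ^ E) := by
      have h2 : ((-1 : K) ^ E) * ((-1 : K) ^ E) = 1 := by
        rw [← pow_add, ← two_mul, pow_mul]; norm_num
      calc s = s * (((-1 : K) ^ E) * ((-1 : K) ^ E)) := by rw [h2, mul_one]
        _ = (s * (-1 : K) ^ E) * (-1 : K) ^ E := by ring
        _ = -((-1 : K) ^ E) := by rw [hsign]; ring
    have hE : ((-1 : K) ^ E) ≠ 0 := pow_ne_zero _ (neg_ne_zero.mpr one_ne_zero)
    rw [hz0, hinvB, hdetB, hsE]
    field_simp
  rw [key]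
  -- expansion of det (S' * R') by multilinearity
  have htr : (S' * R')ᵀ = Matrix.of fun i m => ∑ j : Fin E, R' j i * S' m j := by
    ext i m
    simp [Matrix.mul_apply, mul_comm]
  have hexp : (S' * R').det
      = ∑ J : Fin M → Fin E, (∏ m, R' (J m) m) * (S'.submatrix id J).det := by
    rw [← Matrix.det_transpose, htr]
    have hms := (Matrix.detRowAlternating :
        (Fin M → K) [⋀^Fin M]→ₗ[K] K).toMultilinearMap.map_sum
      (g := fun i j => (fun m => R' j i * S' m j))
    simp only [AlternatingMap.coe_multilinearMap] at hms
    rw [show (Matrix.of fun i m => ∑ j : Fin E, R' j i * S' m j).det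
        = (Matrix.detRowAlternating : (Fin M → K) [⋀^Fin M]→ₗ[K] K)
          (fun i => ∑ j : Fin E, (fun m => R' j i * S' m j)) from by
      congr 1
      funext i m
      simp [Finset.sum_apply], hms]
    refine Finset.sum_congr rfl fun J _ => ?_
    have h2 : (Matrix.detRowAlternating : (Fin M → K) [⋀^Fin M]→ₗ[K] K)
        (fun i => fun m => R' (J i) i * S' m (J i))
        = (Matrix.of fun i m => R' (J i) i * S' m (J i)).det := rfl
    rw [h2, ← Matrix.det_transpose (S'.submatrix id J)]
    exact Matrix.det_mul_column (fun i => R' (J i) i) (S'.submatrix id J)ᵀ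
  rw [hexp]
  refine Finset.sum_congr rfl fun J _ => ?_
  congr 1

open MvPolynomial in
open scoped Classical in
theorem self_influence_expansion (E M : ℕ) (inp : Fin M → Fin E → Prop)
    (S : Matrix (Fin M) (Fin E) ℝ) (hrank : S.rank = M) (j₀ : Fin E)
    (R : Matrix (Fin E) (Fin M) (FractionRing (MvPolynomial (Fin E × Fin M) ℝ)))
    (hR : ∀ j m, R j m = if inp m j then
      algebraMap (MvPolynomial (Fin E × Fin M) ℝ) _ (X (j, m)) else 0)
    (S' : Matrix (Fin M) (Fin E) (FractionRing (MvPolynomial (Fin E × Fin M) ℝ)))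
    (hS' : ∀ m j, S' m j = algebraMap (MvPolynomial (Fin E × Fin M) ℝ) _ (C (S m j)))
    (hdet : (S' * R).det ≠ 0)
    (B : Matrix (Fin E ⊕ Fin M) (Fin E ⊕ Fin M)
      (FractionRing (MvPolynomial (Fin E × Fin M) ℝ)))
    (hB : B = Matrix.fromBlocks (-1) R S' 0)
    (z : Fin E ⊕ Fin M → FractionRing (MvPolynomial (Fin E × Fin M) ℝ))
    (hz : z = -(B⁻¹).mulVec (Pi.single (Sum.inl j₀) 1)) :
    z (Sum.inl j₀) * (S' * R).det =
      algebraMap (MvPolynomial (Fin E × Fin M) ℝ) _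
        (∑ J : Fin M → Fin E,
          if Function.Injective J ∧ (∀ m, inp m (J m)) ∧ (∀ m, J m ≠ j₀) then
            C ((S.submatrix id J).det) * ∏ m, X (J m, m)
          else 0) := by
  classical
  subst hB hz
  rw [aux_self_influence j₀ R S' hdet, map_sum]
  refine Finset.sum_congr rfl fun J _ => ?_
  by_cases hc : Function.Injective J ∧ (∀ m, inp m (J m)) ∧ (∀ m, J m ≠ j₀)
  · rw [if_pos hc]
    obtain ⟨hinj, hinp, hne⟩ := hc
    rw [map_mul, map_prod, mul_comm]
    congr 1
    · have hsub : S'.submatrix id J = (S.submatrix id J).map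
          ((algebraMap (MvPolynomial (Fin E × Fin M) ℝ)
            (FractionRing (MvPolynomial (Fin E × Fin M) ℝ))).comp (C : ℝ →+* _)) := by
        ext m n
        simp [hS', Matrix.submatrix_apply, Matrix.map_apply]
      rw [hsub, ← RingHom.mapMatrix_apply, ← RingHom.map_det, RingHom.comp_apply]
    · refine Finset.prod_congr rfl fun m _ => ?_
      rw [if_neg (hne m), hR (J m) m, if_pos (hinp m)]
  · rw [if_neg hc, map_zero]
    by_cases hinj : Function.Injective J
    · apply mul_eq_zero_of_left
      by_cases hinp : ∀ m, inp m (J m)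
      · push_neg at hc
        obtain ⟨m, hm⟩ := hc hinj hinp
        refine Finset.prod_eq_zero (Finset.mem_univ m) ?_
        rw [if_pos hm]
      · push_neg at hinp
        obtain ⟨m, hm⟩ := hinp
        refine Finset.prod_eq_zero (Finset.mem_univ m) ?_
        by_cases hj : J m = j₀
        · rw [if_pos hj]
        · rw [if_neg hj, hR (J m) m, if_neg hm]
    · apply mul_eq_zero_of_right
      obtain ⟨m₁, m₂, he, hne⟩ : ∃ m₁ m₂, J m₁ = J m₂ ∧ m₁ ≠ m₂ := by
        simp only [Function.Injective, not_forall] at hinj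
        obtain ⟨a, b, h1, h2⟩ := hinj
        exact ⟨a, b, h1, h2⟩
      exact Matrix.det_zero_of_column_eq hne fun k => by
        simp [Matrix.submatrix_apply, he]
end

section
/- (Augmenticity, regularity part) Let a network (E₀, M₀) be a subnetwork of (E₁, M₁), so that the stoichiometric matrix S₁ satisfies S₁ restricted to rows M₀ and columns E₀ equals S₀, and S₁ restricted to rows M₁∖M₀ and columns E₀ is zero. Suppose there is a child selection J₀ : M₀ → E₀ with det S₀^{J₀(M₀)} ≠ 0 and a partial child selection J^∨ : M₁∖M₀ → E₁∖E₀ with det of the corresponding square submatrix of S₁ (rows M₁∖M₀, columns J^∨(M₁∖M₀)) nonzero. Then the combined map J₁ (equal to J₀ on M₀ and J^∨ on M₁∖M₀) is a child selection for the augmented network with det S₁^{J₁(M₁)} ≠ 0. -/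
theorem augmenticity_regularity {M₀ Mn E₀ En : Type*}
    [Fintype M₀] [Fintype Mn] [Fintype E₀] [Fintype En]
    [DecidableEq M₀] [DecidableEq Mn] [DecidableEq E₀] [DecidableEq En]
    (S₁ : Matrix (M₀ ⊕ Mn) (E₀ ⊕ En) ℝ)
    (inp : (M₀ ⊕ Mn) → (E₀ ⊕ En) → Prop)
    (hzero : ∀ (m : Mn) (e : E₀), S₁ (Sum.inr m) (Sum.inl e) = 0)
    (J₀ : M₀ → E₀) (hJ₀inj : Function.Injective J₀)
    (hJ₀inp : ∀ m, inp (Sum.inl m) (Sum.inl (J₀ m)))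
    (hJ₀det : ((Matrix.of fun (m : M₀) (e : E₀) => S₁ (Sum.inl m) (Sum.inl e)).submatrix
        id J₀).det ≠ 0)
    (Jv : Mn → En) (hJvinj : Function.Injective Jv)
    (hJvinp : ∀ m, inp (Sum.inr m) (Sum.inr (Jv m)))
    (hJvdet : ((Matrix.of fun (m : Mn) (e : En) => S₁ (Sum.inr m) (Sum.inr e)).submatrix
        id Jv).det ≠ 0) :
    Function.Injective (Sum.map J₀ Jv) ∧ (∀ m, inp m (Sum.map J₀ Jv m)) ∧
      (S₁.submatrix id (Sum.map J₀ Jv)).det ≠ 0 := by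
  refine ⟨Sum.map_injective.mpr ⟨hJ₀inj, hJvinj⟩, ?_, ?_⟩
  · rintro (m | m)
    · exact hJ₀inp m
    · exact hJvinp m
  · have heq : S₁.submatrix id (Sum.map J₀ Jv) =
        Matrix.fromBlocks
          ((Matrix.of fun (m : M₀) (e : E₀) => S₁ (Sum.inl m) (Sum.inl e)).submatrix id J₀)
          (Matrix.of fun (m : M₀) (e : Mn) => S₁ (Sum.inl m) (Sum.inr (Jv e)))
          0
          ((Matrix.of fun (m : Mn) (e : En) => S₁ (Sum.inr m) (Sum.inr e)).submatrix id Jv) := by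
      ext (m | m) (e | e) <;>
        simp [Matrix.fromBlocks, Matrix.submatrix, hzero]
    rw [heq, Matrix.det_fromBlocks_zero₂₁]
    exact mul_ne_zero hJ₀det hJvdet
end
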